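/- arXiv:1708.04112 — 4 statements merged into one kernel-verified Lean document; each statement's English description precedes it below -/
import Mathlib

section
/- Let ε > 0 and let a, b be real numbers with a ≥ 0 and b ≥ 0. Then (1/ε + √(1 + 1/ε²))⁻¹ · (a + b) ≤ |(1 − iε)·a − b| ≤ √(1 + ε²) · (a + b), where |·| denotes the modulus of a complex number and i the imaginary unit. (This is the pointwise content of Lemma 1: for the analytically continued metric g^ε = (1−iε)β dt² − g_t on a globally hyperbolic analytic spacetime and the Riemannian metric g^R = β dt² + g_t, one has g^ε(ξ,ξ) = (1−iε)a − b and g^R(ξ,ξ) = a + b with a = β(dt(ξ))² ≥ 0 and b = g_t(ξ,ξ) ≥ 0, so this inequality states Ĉ(ε) g^R(ξ,ξ) ≤ |g^ε(ξ,ξ)| ≤ Č(ε) g^R(ξ,ξ) with Ĉ(ε) = (1/ε + √(1+1/ε²))⁻¹ and Č(ε) = √(1+ε²).) -/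
/-- pointwise content of Lemma 1, metric estimate:
for `ε > 0` and nonnegative reals `a, b`,
`Ĉ(ε)·(a+b) ≤ |(1−iε)a − b| ≤ Č(ε)·(a+b)` with
`Ĉ(ε) = (1/ε + √(1+1/ε²))⁻¹` and `Č(ε) = √(1+ε²)`. -/
theorem metric_estimate (ε a b : ℝ) (hε : 0 < ε) (ha : 0 ≤ a) (hb : 0 ≤ b) :
    (1 / ε + Real.sqrt (1 + 1 / ε ^ 2))⁻¹ * (a + b) ≤
      ‖(1 - (ε : ℂ) * Complex.I) * (a : ℂ) - (b : ℂ)‖ ∧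
    ‖(1 - (ε : ℂ) * Complex.I) * (a : ℂ) - (b : ℂ)‖ ≤
      Real.sqrt (1 + ε ^ 2) * (a + b) := by
  have habs : ‖(1 - (ε : ℂ) * Complex.I) * (a : ℂ) - (b : ℂ)‖
      = Real.sqrt ((a - b) ^ 2 + (ε * a) ^ 2) := by
    rw [Complex.norm_def, Complex.normSq_apply]
    simp
    ring_nf
  rw [habs]
  set s := Real.sqrt (1 + 1 / ε ^ 2) with hs_def
  have hs2 : s ^ 2 = 1 + 1 / ε ^ 2 := Real.sq_sqrt (by positivity)
  have hs1 : 1 / ε ≤ s := by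
    rw [hs_def]
    have : (1 / ε) = Real.sqrt ((1/ε)^2) := by
      rw [Real.sqrt_sq (by positivity)]
    rw [this]
    apply Real.sqrt_le_sqrt
    rw [div_pow, one_pow]
    linarith
  have hspos : 0 < 1 / ε + s := by positivity
  constructor
  · rw [mul_comm, ← div_eq_mul_inv, div_le_iff₀ hspos]
    have h1 : a + b ≤ Real.sqrt ((a - b) ^ 2 + (ε * a) ^ 2) * (1 / ε + s) := by
      have key : (a + b) ^ 2 ≤ ((a - b) ^ 2 + (ε * a) ^ 2) * (1 / ε + s) ^ 2 := by
        have hε2 : (0:ℝ) < ε ^ 2 := by positivity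
        have hK : (1 + 4 / ε ^ 2) ≤ (1 / ε + s) ^ 2 := by
          have hεs : 1 ≤ ε * s := by
            have := mul_le_mul_of_nonneg_left hs1 hε.le
            rwa [mul_one_div, div_self hε.ne'] at this
          have hεs2 : ε ^ 2 * s ^ 2 = ε ^ 2 + 1 := by
            rw [hs2]; field_simp
          have e1 : (1 + 4 / ε ^ 2) = (ε ^ 2 + 4) / ε ^ 2 := by field_simp
          have e2 : (1 / ε + s) ^ 2 = (1 + ε * s) ^ 2 / ε ^ 2 := by
            field_simp
          rw [e1, e2, div_le_div_iff₀ hε2 hε2]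
          nlinarith [hεs, hεs2]
        have hkey2 : (a + b) ^ 2 ≤ ((a - b) ^ 2 + (ε * a) ^ 2) * (1 + 4 / ε ^ 2) := by
          have h14 : (1 + 4 / ε ^ 2) = (ε ^ 2 + 4) / ε ^ 2 := by field_simp
          rw [h14, ← mul_div_assoc, le_div_iff₀ hε2]
          nlinarith [sq_nonneg (2*(a-b) + ε^2*a)]
        calc (a + b) ^ 2 ≤ ((a - b) ^ 2 + (ε * a) ^ 2) * (1 + 4 / ε ^ 2) := hkey2
          _ ≤ ((a - b) ^ 2 + (ε * a) ^ 2) * (1 / ε + s) ^ 2 :=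
            mul_le_mul_of_nonneg_left hK (by positivity)
      nlinarith [Real.sq_sqrt (show (0:ℝ) ≤ (a - b) ^ 2 + (ε * a) ^ 2 by positivity),
        Real.sqrt_nonneg ((a - b) ^ 2 + (ε * a) ^ 2), hspos,
        mul_nonneg (Real.sqrt_nonneg ((a - b) ^ 2 + (ε * a) ^ 2)) hspos.le]
    linarith
  · have h2 : Real.sqrt (1 + ε ^ 2) * (a + b) = Real.sqrt ((1 + ε ^ 2) * (a + b) ^ 2) := by
      rw [Real.sqrt_mul (by positivity), Real.sqrt_sq (by positivity)]
    rw [h2]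
    apply Real.sqrt_le_sqrt
    nlinarith [mul_nonneg ha hb, sq_nonneg (ε*b),
      mul_nonneg (mul_nonneg ha hb) (sq_nonneg ε)]
end

section
/- Let ε > 0 and let x = (x₀, 𝐱) ∈ ℝ × ℝ³. Set z² = (1−iε)x₀² − ‖𝐱‖² ∈ ℂ and x_E = √(x₀² + ‖𝐱‖²). Then the modulus of the principal square root of −z² satisfies |√(−z²)| ≤ (1+ε²)^{1/4} · x_E and |√(−z²)| ≥ (1/ε + √(1 + 1/ε²))^{−1/2} · x_E. Equivalently, since |√w| = |w|^{1/2} for the principal branch, (1/ε + √(1+1/ε²))⁻¹ · x_E² ≤ |(1−iε)x₀² − ‖𝐱‖²| ≤ √(1+ε²) · x_E². -/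
lemma abs_cpow_half' (z : ℂ) :
    ‖z ^ ((1 : ℂ) / 2)‖ = ‖z‖ ^ ((1 : ℝ) / 2) := by
  rcases eq_or_ne z 0 with rfl | hz
  · simp [Complex.zero_cpow (by norm_num : (1:ℂ)/2 ≠ 0),
      Real.zero_rpow (by norm_num : (1:ℝ)/2 ≠ 0)]
  · rw [Complex.norm_cpow_of_ne_zero hz]
    norm_num

/-- Euclidean bounds on the continued square interval:
for `ε > 0` and `x = (x₀, 𝐱) ∈ ℝ × ℝ³`, with `z² = (1−iε)x₀² − ‖𝐱‖²` and
`x_E = √(x₀² + ‖𝐱‖²)`, the modulus of the principal square root of `−z²` satisfies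
`|√(−z²)| ≤ (1+ε²)^{1/4}·x_E` and `|√(−z²)| ≥ (1/ε + √(1+1/ε²))^{−1/2}·x_E`;
equivalently `(1/ε + √(1+1/ε²))⁻¹·x_E² ≤ |(1−iε)x₀² − ‖𝐱‖²| ≤ √(1+ε²)·x_E²`. -/
theorem sqrt_interval_euclidean_bounds (ε : ℝ) (hε : 0 < ε)
    (x₀ : ℝ) (x : EuclideanSpace ℝ (Fin 3)) :
    ‖(((‖x‖ : ℂ) ^ 2 - (1 - (ε : ℂ) * Complex.I) * (x₀ : ℂ) ^ 2) ^ ((1 : ℂ) / 2))‖ ≤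
        (1 + ε ^ 2) ^ ((1 : ℝ) / 4) * Real.sqrt (x₀ ^ 2 + ‖x‖ ^ 2) ∧
    (1 / ε + Real.sqrt (1 + 1 / ε ^ 2)) ^ (-(1 : ℝ) / 2) * Real.sqrt (x₀ ^ 2 + ‖x‖ ^ 2) ≤
        ‖(((‖x‖ : ℂ) ^ 2 - (1 - (ε : ℂ) * Complex.I) * (x₀ : ℂ) ^ 2) ^ ((1 : ℂ) / 2))‖ ∧
    (1 / ε + Real.sqrt (1 + 1 / ε ^ 2))⁻¹ * (x₀ ^ 2 + ‖x‖ ^ 2) ≤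
        ‖((1 - (ε : ℂ) * Complex.I) * (x₀ : ℂ) ^ 2 - (‖x‖ : ℂ) ^ 2)‖ ∧
    ‖((1 - (ε : ℂ) * Complex.I) * (x₀ : ℂ) ^ 2 - (‖x‖ : ℂ) ^ 2)‖ ≤
        Real.sqrt (1 + ε ^ 2) * (x₀ ^ 2 + ‖x‖ ^ 2) := by
  set a := x₀ ^ 2 with ha'
  set b := ‖x‖ ^ 2 with hb'
  have ha : 0 ≤ a := sq_nonneg _
  have hb : 0 ≤ b := sq_nonneg _
  set w : ℂ := (1 - (ε : ℂ) * Complex.I) * (x₀ : ℂ) ^ 2 - (‖x‖ : ℂ) ^ 2 with hw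
  have hre : w.re = a - b := by
    simp [hw, ha', hb', ← Complex.ofReal_pow]
  have him : w.im = -(ε * a) := by
    simp [hw, ha', hb', ← Complex.ofReal_pow]
  have habs2 : (‖w‖) ^ 2 = (a - b) ^ 2 + (ε * a) ^ 2 := by
    rw [Complex.sq_norm, Complex.normSq_apply, hre, him]; ring
  have habsnn : 0 ≤ ‖w‖ := norm_nonneg w
  set s := Real.sqrt (1 + ε ^ 2) with hs'
  have hs2 : s ^ 2 = 1 + ε ^ 2 := Real.sq_sqrt (by positivity)
  have hs1 : 1 ≤ s := by nlinarith [Real.sqrt_nonneg (1 + ε ^ 2)]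
  have heps : ε ^ 2 = s ^ 2 - 1 := by linarith
  -- the constant
  have hK : 1 / ε + Real.sqrt (1 + 1 / ε ^ 2) = (1 + s) / ε := by
    have h1 : (1 : ℝ) + 1 / ε ^ 2 = (1 + ε ^ 2) / ε ^ 2 := by field_simp; ring
    rw [h1, Real.sqrt_div' (1 + ε ^ 2) (sq_nonneg ε), ← hs', Real.sqrt_sq hε.le]
    ring
  have hKpos : 0 < (1 + s) / ε := by positivity
  -- upper bound on |w|
  have hub : ‖w‖ ≤ s * (a + b) := by
    have h1 : (‖w‖) ^ 2 ≤ (s * (a + b)) ^ 2 := by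
      have hsq : (s * (a + b)) ^ 2 = (1 + ε ^ 2) * (a + b) ^ 2 := by
        rw [mul_pow, hs2]
      rw [habs2, hsq]
      nlinarith [mul_nonneg ha hb, sq_nonneg ε, mul_nonneg (sq_nonneg ε) (mul_nonneg ha hb),
        mul_nonneg (sq_nonneg ε) (mul_nonneg hb hb)]
    have h2 : 0 ≤ s * (a + b) := by positivity
    nlinarith
  -- lower bound on |w|
  have hlb : ((1 + s) / ε)⁻¹ * (a + b) ≤ ‖w‖ := by
    rw [inv_div, div_mul_eq_mul_div, div_le_iff₀ (by positivity)]
    have h1 : (ε * (a + b)) ^ 2 ≤ (‖w‖ * (1 + s)) ^ 2 := by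
      have h2 : (‖w‖ * (1 + s)) ^ 2
          = ((a - b) ^ 2 + (ε * a) ^ 2) * (1 + s) ^ 2 := by rw [mul_pow, habs2]
      rw [h2]
      have h3 : (ε * (a + b)) ^ 2 = (s ^ 2 - 1) * (a + b) ^ 2 := by
        rw [mul_pow, heps]
      have h4 : ((a - b) ^ 2 + (ε * a) ^ 2)
          = (a - b) ^ 2 + (s ^ 2 - 1) * a ^ 2 := by rw [mul_pow, heps]
      rw [h3, h4]
      nlinarith [mul_nonneg (show (0:ℝ) ≤ 1 + s by linarith) (sq_nonneg (b - s * a)),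
        sq_nonneg ((s ^ 2 - 1) * a)]
    exact (pow_le_pow_iff_left₀ (by positivity)
      (mul_nonneg habsnn (by linarith)) two_ne_zero).mp h1
  have habsneg : ‖((‖x‖ : ℂ) ^ 2 - (1 - (ε : ℂ) * Complex.I) * (x₀ : ℂ) ^ 2)‖
      = ‖w‖ := by
    rw [← norm_neg, hw]; congr 1; ring
  have hsqrt_ab : Real.sqrt (a + b) = (a + b) ^ ((1:ℝ)/2) := Real.sqrt_eq_rpow _
  refine ⟨?_, ?_, by rwa [hK], hub⟩
  · rw [abs_cpow_half', habsneg]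
    calc ‖w‖ ^ ((1:ℝ)/2) ≤ (s * (a + b)) ^ ((1:ℝ)/2) :=
          Real.rpow_le_rpow habsnn hub (by norm_num)
      _ = (1 + ε ^ 2) ^ ((1:ℝ)/4) * Real.sqrt (a + b) := by
          rw [Real.mul_rpow (by positivity) (by positivity), hsqrt_ab, hs',
            Real.sqrt_eq_rpow, ← Real.rpow_mul (by positivity)]
          norm_num
  · rw [abs_cpow_half', habsneg, hK]
    have key : ((1 + s) / ε) ^ (-(1:ℝ)/2) * Real.sqrt (a + b)
        = (((1 + s) / ε)⁻¹ * (a + b)) ^ ((1:ℝ)/2) := by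
      rw [Real.mul_rpow (by positivity) (by positivity), hsqrt_ab,
        ← Real.rpow_neg_one ((1+s)/ε), ← Real.rpow_mul (by positivity)]
      norm_num
    rw [key]
    exact Real.rpow_le_rpow (by positivity) hlb (by norm_num)
end

section
/- Let ν ∈ ℕ, ε > 0, and x = (x₀, 𝐱) ∈ ℝ × ℝ³ with x ≠ 0. Set z² = (1−iε)x₀² − ‖𝐱‖², x_E = √(x₀² + ‖𝐱‖²), and x̂_E = (1/ε + √(1 + 1/ε²))^{−1/2} · x_E. Then K_ν(|√(−z²)|) ≤ K_ν(x̂_E), where K_ν is the modified Bessel function of the second kind given by K_ν(s) = ∫₀^∞ exp(−s cosh t) cosh(ν t) dt for s > 0, and √(·) denotes the principal branch of the complex square root. -/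
/-- The modified Bessel function of the second kind for real argument,
`K_ν(s) = ∫₀^∞ exp(−s cosh t) cosh(νt) dt`. -/
noncomputable def besselK (ν : ℕ) (s : ℝ) : ℝ :=
  ∫ t in Set.Ioi (0 : ℝ), Real.exp (-s * Real.cosh t) * Real.cosh (ν * t)

open Real MeasureTheory Filter




lemma besselK_integrand_integrable (ν : ℕ) {s : ℝ} (hs : 0 < s) :
    IntegrableOn (fun t => Real.exp (-s * Real.cosh t) * Real.cosh (ν * t)) (Set.Ioi (0:ℝ)) := by
  apply integrable_of_isBigO_exp_neg (b := 1) one_pos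
  · exact Continuous.continuousOn (by fun_prop)
  · have hlo : (fun t : ℝ => t) =o[atTop] Real.exp := by
      simpa using Real.isLittleO_pow_exp_atTop (n := 1)
    have hc : (0:ℝ) < s / (2 * (ν + 1)) := by positivity
    have h1 := hlo.def hc
    rw [Asymptotics.isBigO_iff]
    refine ⟨1, ?_⟩
    filter_upwards [h1, eventually_ge_atTop (0:ℝ)] with t ht ht0
    have hexp : Real.exp t / 2 ≤ Real.cosh t := by
      rw [Real.cosh_eq]
      have := Real.exp_pos (-t)
      linarith
    have hνt : Real.cosh (ν * t) ≤ Real.exp (ν * t) := by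
      rw [Real.cosh_eq]
      have h2 : Real.exp (-(ν * t)) ≤ Real.exp (ν * t) := by
        apply Real.exp_le_exp.2; nlinarith [Nat.cast_nonneg (α := ℝ) ν]
      linarith
    have ht' : (ν + 1 : ℝ) * t ≤ s * (Real.exp t / 2) := by
      rw [Real.norm_eq_abs, Real.norm_eq_abs, abs_of_nonneg ht0,
        abs_of_nonneg (Real.exp_pos t).le] at ht
      rw [div_mul_eq_mul_div, le_div_iff₀ (by positivity : (0:ℝ) < 2*(ν+1))] at ht
      · nlinarith [Nat.cast_nonneg (α := ℝ) ν]
    have key : Real.exp (-s * Real.cosh t) * Real.cosh (ν * t) ≤ Real.exp (-1 * t) := by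
      calc Real.exp (-s * Real.cosh t) * Real.cosh (ν * t)
          ≤ Real.exp (-s * (Real.exp t / 2)) * Real.exp (ν * t) := by
            apply mul_le_mul _ hνt ((Real.cosh_pos _).le) (Real.exp_pos _).le
            apply Real.exp_le_exp.2; nlinarith
        _ ≤ Real.exp (-1 * t) := by
            rw [← Real.exp_add]; apply Real.exp_le_exp.2; nlinarith
    rw [Real.norm_eq_abs, Real.norm_eq_abs, abs_of_nonneg (by positivity),
      abs_of_nonneg (Real.exp_pos _).le, one_mul]
    exact key

lemma besselK_anti (ν : ℕ) {a b : ℝ} (hb : 0 < b) (hba : b ≤ a) :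
    besselK ν a ≤ besselK ν b := by
  unfold besselK
  apply integral_mono_of_nonneg
  · filter_upwards with t
    positivity
  · exact besselK_integrand_integrable ν hb
  · filter_upwards with t
    apply mul_le_mul_of_nonneg_right _ ((Real.cosh_pos _).le)
    apply Real.exp_le_exp.2
    nlinarith [Real.cosh_pos t]

/-- for `ν ∈ ℕ`, `ε > 0` and `x = (x₀, 𝐱) ∈ ℝ × ℝ³` with `x ≠ 0`,
setting `z² = (1−iε)x₀² − ‖𝐱‖²`, `x_E = √(x₀² + ‖𝐱‖²)` and
`x̂_E = (1/ε + √(1+1/ε²))^{−1/2}·x_E`, one has `K_ν(|√(−z²)|) ≤ K_ν(x̂_E)`,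
where `√` is the principal branch. -/
theorem besselK_lower_arg_bound (ν : ℕ) (ε : ℝ) (hε : 0 < ε)
    (x₀ : ℝ) (x : EuclideanSpace ℝ (Fin 3)) (hx : x₀ ≠ 0 ∨ x ≠ 0) :
    besselK ν (‖((-((1 - (ε : ℂ) * Complex.I) * (x₀ : ℂ) ^ 2 - (‖x‖ : ℂ) ^ 2)) ^ ((1 : ℂ) / 2))‖) ≤
      besselK ν ((1 / ε + Real.sqrt (1 + 1 / ε ^ 2)) ^ (-(1 : ℝ) / 2) *
        Real.sqrt (x₀ ^ 2 + ‖x‖ ^ 2)) := by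
  set a : ℝ := ‖x‖ ^ 2 with ha
  set b : ℝ := x₀ ^ 2 with hb
  have hab : 0 < a + b := by
    rcases hx with h | h
    · have : 0 < b := pow_two_pos_of_ne_zero h
      have : 0 ≤ a := by positivity
      linarith
    · have : 0 < a := by
        have := norm_pos_iff.mpr h
        positivity
      have : 0 ≤ b := by positivity
      linarith
  set w : ℂ := -((1 - (ε : ℂ) * Complex.I) * (x₀ : ℂ) ^ 2 - (‖x‖ : ℂ) ^ 2) with hw
  have hwre : w.re = a - b := by simp [hw, ha, hb, ← Complex.ofReal_pow]
  have hwim : w.im = ε * b := by simp [hw, hb, ← Complex.ofReal_pow]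
  have hw0 : w ≠ 0 := by
    intro h
    rw [Complex.ext_iff] at h
    simp only [Complex.zero_re, Complex.zero_im, hwre, hwim] at h
    have hb0 : b = 0 := by
      rcases h with ⟨h1, h2⟩
      rcases mul_eq_zero.1 h2 with h | h
      · exact absurd h hε.ne'
      · exact h
    have ha0 : a = 0 := by rcases h with ⟨h1, _⟩; linarith
    rw [ha0, hb0] at hab; linarith
  have habs : ‖w ^ ((1:ℂ)/2)‖ = ‖w‖ ^ ((1:ℝ)/2) := by
    rw [Complex.norm_cpow_of_ne_zero hw0]
    norm_num
  have habsw : ‖w‖ = Real.sqrt ((a-b)^2 + (ε*b)^2) := by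
    rw [Complex.norm_def, Complex.normSq_apply, hwre, hwim]
    ring_nf
  set M : ℝ := 1 / ε + Real.sqrt (1 + 1 / ε ^ 2) with hM
  have hM0 : 0 < M := by
    rw [hM]; positivity
  have hMsq : ε ^ 2 + 4 ≤ ε ^ 2 * M ^ 2 := by
    have h7 : ε * Real.sqrt (1 + 1/ε^2) = Real.sqrt (ε^2 + 1) := by
      rw [← Real.sqrt_sq hε.le, ← Real.sqrt_mul (by positivity)]
      · congr 1
        field_simp
        rw [Real.sq_sqrt (by positivity)]
    have hεM : ε * M = 1 + Real.sqrt (ε^2 + 1) := by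
      rw [hM, mul_add, mul_one_div, div_self hε.ne', h7]
    have h8 : 1 ≤ Real.sqrt (ε^2 + 1) := by
      calc (1:ℝ) = Real.sqrt 1 := by simp
        _ ≤ Real.sqrt (ε^2+1) := Real.sqrt_le_sqrt (by nlinarith)
    have h9 : Real.sqrt (ε^2 + 1) ^ 2 = ε^2 + 1 := Real.sq_sqrt (by positivity)
    have h10 : (ε * M) ^ 2 = (1 + Real.sqrt (ε^2 + 1)) ^ 2 := by rw [hεM]
    nlinarith [h10, h8, h9]
  -- key real inequality: (a+b)^2 ≤ M^2 * ((a-b)^2 + (ε b)^2)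
  have hkey : (a + b) ^ 2 ≤ M ^ 2 * ((a - b) ^ 2 + (ε * b) ^ 2) := by
    have hsq : 0 ≤ (2*a - (2 + ε^2)*b)^2 := sq_nonneg _
    have hab2 : 0 ≤ (a-b)^2 + (ε*b)^2 := by positivity
    have hε2 : 0 < ε^2 := by positivity
    have h1 : ε^2 * (a+b)^2 ≤ (4 + ε^2) * ((a-b)^2 + (ε*b)^2) := by nlinarith
    have h2 := mul_le_mul_of_nonneg_right hMsq hab2
    nlinarith [h1, h2, hε2, mul_pos hε2 hε2]
  -- set xhat and show xhat ≤ |w|^(1/2), with xhat > 0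
  set xh : ℝ := M ^ (-(1:ℝ)/2) * Real.sqrt (a + b) with hxh
  have hxh0 : 0 < xh := by
    apply mul_pos (Real.rpow_pos_of_pos hM0 _) (Real.sqrt_pos.2 hab)
  have hle : xh ≤ ‖w‖ ^ ((1:ℝ)/2) := by
    have h1 : xh ^ 2 = M⁻¹ * (a + b) := by
      rw [hxh, mul_pow, ← Real.rpow_natCast (M ^ (-(1:ℝ)/2)) 2, ← Real.rpow_mul hM0.le,
        Real.sq_sqrt hab.le]
      norm_num
      exact Or.inl (Real.rpow_neg_one M)
    have h2 : (‖w‖ ^ ((1:ℝ)/2)) ^ 2 = ‖w‖ := by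
      rw [← Real.rpow_natCast (‖w‖ ^ ((1:ℝ)/2)) 2, ← Real.rpow_mul (norm_nonneg w)]
      norm_num
    have h3 : xh ^ 2 ≤ (‖w‖ ^ ((1:ℝ)/2)) ^ 2 := by
      rw [h1, h2, habsw]
      rw [inv_mul_le_iff₀ hM0]
      have h4 : (a+b)^2 ≤ (M * Real.sqrt ((a-b)^2 + (ε*b)^2))^2 := by
        rw [mul_pow, Real.sq_sqrt (by positivity)]
        exact hkey
      have h5 : 0 ≤ M * Real.sqrt ((a-b)^2 + (ε*b)^2) := by positivity
      calc a + b = Real.sqrt ((a+b)^2) := (Real.sqrt_sq hab.le).symm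
        _ ≤ Real.sqrt ((M * Real.sqrt ((a-b)^2 + (ε*b)^2))^2) := Real.sqrt_le_sqrt h4
        _ = M * Real.sqrt ((a-b)^2 + (ε*b)^2) := Real.sqrt_sq h5
    have h6 := Real.sqrt_le_sqrt h3
    rwa [Real.sqrt_sq hxh0.le,
      Real.sqrt_sq (Real.rpow_nonneg (norm_nonneg w) _)] at h6
  rw [habs]
  rw [show Real.sqrt (x₀^2 + ‖x‖^2) = Real.sqrt (a + b) by rw [ha, hb]; ring_nf]
  exact besselK_anti ν hxh0 hle
end

section
/- Let d, d' ∈ ℕ with d' ≤ d, let f : ℝⁿ → ℝ be of class C^d, and let a, a' ∈ ℝⁿ. Denote by t^d_a the Taylor operator assigning to a C^d function its Taylor polynomial of order d about a. Then (1 − t^d_a)((1 − t^{d'}_{a'}) f) = (1 − t^d_a) f as functions on ℝⁿ; that is, for every x ∈ ℝⁿ, (f(x) − (t^{d'}_{a'} f)(x)) − t^d_a(f − t^{d'}_{a'} f)(x) = f(x) − (t^d_a f)(x). In other words, an additional lower-order Taylor subtraction about a (possibly different) point a' does not change the order-d Taylor remainder about a; it only amounts to a reshuffling of the subtracted polynomial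 terms. -/
/-- The Taylor operator of the configuration-space BPHZ scheme: the Taylor polynomial
of order `d` of `f : ℝⁿ → ℝ` about `a`, `(t^d_a f)(x) = Σ_{k≤d} (1/k!) D^k f(a)[(x−a),…]`,
with `D^k f(a)` the `k`-th Fréchet derivative of `f` at `a`. -/
noncomputable def taylorOp {n : ℕ} (d : ℕ) (f : EuclideanSpace ℝ (Fin n) → ℝ)
    (a x : EuclideanSpace ℝ (Fin n)) : ℝ :=
  ∑ k ∈ Finset.range (d + 1),
    ((k.factorial : ℝ))⁻¹ * iteratedFDeriv ℝ k f a (fun _ => x - a)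

open Polynomial

section Aux

variable {E : Type*} [NormedAddCommGroup E] [NormedSpace ℝ E]

/-- Iterated (1-D) derivative of a polynomial evaluation. -/
private lemma iteratedDeriv_polyEval (q : ℝ[X]) (k : ℕ) :
    iteratedDeriv k (fun s : ℝ => q.eval s) = fun t => (derivative^[k] q).eval t := by
  induction k generalizing q with
  | zero => simp
  | succ k ih =>
    rw [iteratedDeriv_succ', show deriv (fun s : ℝ => q.eval s)
        = fun s : ℝ => (derivative q).eval s
        from funext fun s => Polynomial.deriv (p := q), ih, Function.iterate_succ_apply]

/-- Iterated derivative of a smooth function along an affine line. -/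
private lemma iteratedDeriv_line (g : E → ℝ) (hg : ContDiff ℝ ⊤ g) (a v : E) (k : ℕ) (t : ℝ) :
    iteratedDeriv k (fun s : ℝ => g (a + s • v)) t
      = iteratedFDeriv ℝ k g (a + t • v) (fun _ => v) := by
  induction k generalizing t with
  | zero => simp
  | succ k ih =>
    rw [iteratedDeriv_succ,
      show iteratedDeriv k (fun s : ℝ => g (a + s • v))
          = fun t => iteratedFDeriv ℝ k g (a + t • v) (fun _ => v) from funext fun t => ih t]
    have hline : HasDerivAt (fun s : ℝ => a + s • v) v t := by
      simpa using (((hasDerivAt_id t).smul_const v).const_add a)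
    have hD : HasFDerivAt (iteratedFDeriv ℝ k g)
        (fderiv ℝ (iteratedFDeriv ℝ k g) (a + t • v)) (a + t • v) :=
      ((hg.iteratedFDeriv_right (m := 1) (by exact le_top)).differentiable (by simp)
        (a + t • v)).hasFDerivAt
    have hA := (ContinuousMultilinearMap.apply ℝ (fun _ : Fin k => E) ℝ
        (fun _ => v)).hasFDerivAt (x := iteratedFDeriv ℝ k g (a + t • v))
    have hcomp := (hA.comp (a + t • v) hD).comp_hasDerivAt t hline
    have hd := hcomp.deriv
    simp only [Function.comp_def, ContinuousMultilinearMap.apply_apply] at hd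
    rw [hd, iteratedFDeriv_succ_apply_left]
    simp [ContinuousMultilinearMap.apply_apply, Fin.tail_def]

/-- 1-D Taylor sum at `0`, evaluated at `1`, reproduces a polynomial of low degree. -/
private lemma poly_taylor_sum (q : ℝ[X]) (d : ℕ) (h : q.natDegree ≤ d) :
    ∑ k ∈ Finset.range (d + 1), ((k.factorial : ℝ))⁻¹ * (derivative^[k] q).eval 0
      = q.eval 1 := by
  have h1 : ∀ k : ℕ, (derivative^[k] q).eval 0 = (k.factorial : ℝ) * q.coeff k := by
    intro k
    rw [← Polynomial.coeff_zero_eq_eval_zero, Polynomial.coeff_iterate_derivative]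
    simp [Nat.descFactorial_self, nsmul_eq_mul]
  rw [Polynomial.eval_eq_sum_range' (Nat.lt_succ_of_le h)]
  refine Finset.sum_congr rfl fun k _ => ?_
  rw [h1 k]
  field_simp
  simp

/-- The diagonal application of a continuous multilinear map, along a line,
is a polynomial of degree at most `k`. -/
private lemma multilinear_line_poly {k : ℕ}
    (c : ContinuousMultilinearMap ℝ (fun _ : Fin k => E) ℝ) (w v : E) (t : ℝ) :
    c (fun _ => w + t • v)
      = (∑ s : Finset (Fin k),
          (Polynomial.C (c (s.piecewise (fun _ => v) (fun _ => w))) *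
            Polynomial.X ^ s.card : ℝ[X])).eval t := by
  classical
  have h0 : (fun _ : Fin k => w + t • v) = (fun _ : Fin k => t • v) + (fun _ : Fin k => w) := by
    funext i; simp [add_comm]
  rw [h0, ContinuousMultilinearMap.map_add_univ]
  rw [Polynomial.eval_finset_sum]
  refine Finset.sum_congr rfl fun s _ => ?_
  have h1 : s.piecewise (fun _ : Fin k => t • v) (fun _ : Fin k => w)
      = s.piecewise (fun i => t • (s.piecewise (fun _ : Fin k => v) (fun _ : Fin k => w)) i)
          (s.piecewise (fun _ : Fin k => v) (fun _ : Fin k => w)) := by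
    funext i
    by_cases hi : i ∈ s <;> simp [Finset.piecewise_eq_of_mem, Finset.piecewise_eq_of_notMem, hi]
  rw [h1,
    show c (s.piecewise (fun i => t • (s.piecewise (fun _ : Fin k => v) (fun _ : Fin k => w)) i)
        (s.piecewise (fun _ : Fin k => v) (fun _ : Fin k => w)))
      = c.toMultilinearMap (s.piecewise
          (fun i => t • (s.piecewise (fun _ : Fin k => v) (fun _ : Fin k => w)) i)
          (s.piecewise (fun _ : Fin k => v) (fun _ : Fin k => w))) from rfl,
    c.toMultilinearMap.map_piecewise_smul (fun _ => t)
      (s.piecewise (fun _ : Fin k => v) (fun _ : Fin k => w)) s]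
  rw [Finset.prod_const, smul_eq_mul, Polynomial.eval_mul, Polynomial.eval_C,
    Polynomial.eval_pow, Polynomial.eval_X]
  exact mul_comm _ _

end Aux

/-- The Taylor polynomial is a smooth function of the evaluation point. -/
private lemma taylorOp_contDiff {n : ℕ} (d' : ℕ) (f : EuclideanSpace ℝ (Fin n) → ℝ)
    (a' : EuclideanSpace ℝ (Fin n)) : ContDiff ℝ ⊤ (taylorOp d' f a') := by
  have h : taylorOp d' f a' = fun x => ∑ k ∈ Finset.range (d' + 1),
      ((k.factorial : ℝ))⁻¹ * (iteratedFDeriv ℝ k f a') (fun _ => x - a') := rfl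
  rw [h]
  refine ContDiff.sum fun k _ => ContDiff.mul contDiff_const ?_
  exact (iteratedFDeriv ℝ k f a').contDiff.comp
    (contDiff_pi.mpr fun _ => contDiff_id.sub contDiff_const)

/-- Along any line, the Taylor polynomial is given by a 1-D polynomial of degree `≤ d'`. -/
private lemma taylorOp_line_eq_poly {n : ℕ} (d' : ℕ) (f : EuclideanSpace ℝ (Fin n) → ℝ)
    (a' a v : EuclideanSpace ℝ (Fin n)) :
    ∃ q : ℝ[X], q.natDegree ≤ d' ∧ ∀ t : ℝ, taylorOp d' f a' (a + t • v) = q.eval t := by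
  classical
  refine ⟨∑ k ∈ Finset.range (d' + 1), ∑ s : Finset (Fin k),
      Polynomial.C (((k.factorial : ℝ))⁻¹ *
        (iteratedFDeriv ℝ k f a') (s.piecewise (fun _ => v) (fun _ => a - a'))) *
        Polynomial.X ^ s.card, ?_, ?_⟩
  · refine Polynomial.natDegree_sum_le_of_forall_le _ _ fun k hk => ?_
    refine Polynomial.natDegree_sum_le_of_forall_le _ _ fun s _ => ?_
    refine le_trans (Polynomial.natDegree_C_mul_X_pow_le _ _) ?_
    exact le_trans (by simpa using Finset.card_le_univ s)
      (Nat.lt_succ_iff.mp (Finset.mem_range.mp hk))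
  · intro t
    show (∑ k ∈ Finset.range (d' + 1),
        ((k.factorial : ℝ))⁻¹ * iteratedFDeriv ℝ k f a' (fun _ => a + t • v - a')) = _
    rw [Polynomial.eval_finset_sum]
    refine Finset.sum_congr rfl fun k _ => ?_
    rw [show (fun _ : Fin k => a + t • v - a') = (fun _ : Fin k => (a - a') + t • v)
        from funext fun _ => by abel,
      multilinear_line_poly (iteratedFDeriv ℝ k f a') (a - a') v t,
      Polynomial.eval_finset_sum, Polynomial.eval_finset_sum, Finset.mul_sum]
    refine Finset.sum_congr rfl fun s _ => ?_
    simp [mul_assoc]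

/-- The order-`d` Taylor operator reproduces Taylor polynomials of order `d' ≤ d`. -/
private lemma taylorOp_reproduces {n : ℕ} (d d' : ℕ) (hdd : d' ≤ d)
    (f : EuclideanSpace ℝ (Fin n) → ℝ) (a' a x : EuclideanSpace ℝ (Fin n)) :
    taylorOp d (taylorOp d' f a') a x = taylorOp d' f a' x := by
  obtain ⟨q, hq, hval⟩ := taylorOp_line_eq_poly d' f a' a (x - a)
  have hp : ContDiff ℝ ⊤ (taylorOp d' f a') := taylorOp_contDiff d' f a'
  have key : ∀ k : ℕ, iteratedFDeriv ℝ k (taylorOp d' f a') a (fun _ => x - a)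
      = (derivative^[k] q).eval 0 := by
    intro k
    have h1 := iteratedDeriv_line (taylorOp d' f a') hp a (x - a) k 0
    rw [show a + (0 : ℝ) • (x - a) = a by simp] at h1
    rw [← h1, show (fun s : ℝ => taylorOp d' f a' (a + s • (x - a))) = fun s : ℝ => q.eval s
        from funext fun s => hval s, iteratedDeriv_polyEval]
  have h2 : taylorOp d (taylorOp d' f a') a x
      = ∑ k ∈ Finset.range (d + 1), ((k.factorial : ℝ))⁻¹ * (derivative^[k] q).eval 0 :=
    Finset.sum_congr rfl fun k _ => by rw [key k]
  rw [h2, poly_taylor_sum q d (hq.trans hdd), ← hval 1]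
  congr 1
  rw [one_smul, add_sub_cancel]

/-- for `d' ≤ d`, `f ∈ C^d(ℝⁿ)` and points `a, a' ∈ ℝⁿ`, an additional
lower-order Taylor subtraction about a (possibly different) point `a'` does not change
the order-`d` Taylor remainder about `a`:
`(1 − t^d_a)((1 − t^{d'}_{a'}) f) = (1 − t^d_a) f`. -/
theorem taylor_remainder_extra_subtraction (n d d' : ℕ) (hdd : d' ≤ d)
    (f : EuclideanSpace ℝ (Fin n) → ℝ) (hf : ContDiff ℝ (d : ℕ∞) f)
    (a a' : EuclideanSpace ℝ (Fin n)) (x : EuclideanSpace ℝ (Fin n)) :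
    (f x - taylorOp d' f a' x) -
        taylorOp d (fun y => f y - taylorOp d' f a' y) a x =
      f x - taylorOp d f a x := by
  have hp : ContDiff ℝ ⊤ (taylorOp d' f a') := taylorOp_contDiff d' f a'
  have hlin : taylorOp d (fun y => f y - taylorOp d' f a' y) a x
      = taylorOp d f a x - taylorOp d (taylorOp d' f a') a x := by
    show (∑ k ∈ Finset.range (d + 1), ((k.factorial : ℝ))⁻¹ *
        iteratedFDeriv ℝ k (fun y => f y - taylorOp d' f a' y) a (fun _ => x - a)) = _
    rw [show taylorOp d f a x - taylorOp d (taylorOp d' f a') a x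
        = ∑ k ∈ Finset.range (d + 1), (((k.factorial : ℝ))⁻¹ *
            iteratedFDeriv ℝ k f a (fun _ => x - a)
          - ((k.factorial : ℝ))⁻¹ *
            iteratedFDeriv ℝ k (taylorOp d' f a') a (fun _ => x - a))
        from (Finset.sum_sub_distrib _ _).symm]
    refine Finset.sum_congr rfl fun k hk => ?_
    have hkd : k ≤ d := Nat.lt_succ_iff.mp (Finset.mem_range.mp hk)
    have hfk : ContDiff ℝ (k : ℕ∞) f := hf.of_le (by exact_mod_cast hkd)
    have hpk : ContDiff ℝ (k : ℕ∞) (-(taylorOp d' f a')) := (hp.of_le le_top).neg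
    have hsub : (fun y => f y - taylorOp d' f a' y) = f + (-(taylorOp d' f a')) := by
      funext y; simp [sub_eq_add_neg]
    rw [hsub, iteratedFDeriv_add_apply hfk.contDiffAt hpk.contDiffAt, iteratedFDeriv_neg_apply]
    simp only [ContinuousMultilinearMap.add_apply, ContinuousMultilinearMap.neg_apply]
    ring
  rw [hlin, taylorOp_reproduces d d' hdd f a' a x]
  ring
end
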